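/- If z belongs to the odd part SV_1̄ of SV = SV[Γ,s] and [z,z] = 0, then z = 0. -/

import Mathlib

noncomputable section

namespace SVSuper

variable (Γ : AddSubgroup ℂ) (s : ℂ)

/-- Basis index type of `SV[Γ,s]`: `Sum.inl (α, i)` stands for `L_{α,i}` (`α ∈ Γ`),
`Sum.inr (μ, j)` stands for `G_{μ,j}` (`μ ∈ s + Γ`). -/
abbrev Idx : Type := (Γ × ℕ) ⊕ ({μ : ℂ // μ - s ∈ Γ} × ℕ)

/-- The underlying vector space of `SV[Γ,s]`: the free `ℂ`-module on `Idx`. -/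
abbrev SV : Type := Idx Γ s →₀ ℂ

/-- The basis vector `L_{α,i}`. -/
def lgen (α : ℂ) (hα : α ∈ Γ) (i : ℕ) : SV Γ s :=
  Finsupp.single (Sum.inl (⟨α, hα⟩, i)) 1

/-- The basis vector `G_{μ,j}`. -/
def ggen (μ : ℂ) (hμ : μ - s ∈ Γ) (j : ℕ) : SV Γ s :=
  Finsupp.single (Sum.inr (⟨μ, hμ⟩, j)) 1

theorem memLG {α μ : ℂ} (hα : α ∈ Γ) (hμ : μ - s ∈ Γ) : α + μ - s ∈ Γ := by
  have h : α + μ - s = α + (μ - s) := by ring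
  rw [h]; exact add_mem hα hμ

theorem memGG (hs : 2 * s ∈ Γ) {μ ν : ℂ} (hμ : μ - s ∈ Γ) (hν : ν - s ∈ Γ) :
    μ + ν ∈ Γ := by
  have h : μ + ν = (μ - s) + (ν - s) + 2 * s := by ring
  rw [h]; exact add_mem (add_mem hμ hν) hs

/-- The bracket on basis vectors (any symbol with second index `-1` is interpreted as `0`;
here this is automatic since the corresponding coefficient vanishes when `i = j = 0`). -/
def bk (hs : 2 * s ∈ Γ) : Idx Γ s → Idx Γ s → SV Γ s
  | Sum.inl (⟨α, hα⟩, i), Sum.inl (⟨β, hβ⟩, j) =>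
      (β - α) • lgen Γ s (α + β) (add_mem hα hβ) (i + j)
        + ((j : ℂ) - (i : ℂ)) • lgen Γ s (α + β) (add_mem hα hβ) (i + j - 1)
  | Sum.inl (⟨α, hα⟩, i), Sum.inr (⟨μ, hμ⟩, j) =>
      (μ - α / 2) • ggen Γ s (α + μ) (memLG Γ s hα hμ) (i + j)
        + ((j : ℂ) - (i : ℂ) / 2) • ggen Γ s (α + μ) (memLG Γ s hα hμ) (i + j - 1)
  | Sum.inr (⟨μ, hμ⟩, i), Sum.inl (⟨α, hα⟩, j) =>
      -((μ - α / 2) • ggen Γ s (α + μ) (memLG Γ s hα hμ) (j + i)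
        + ((i : ℂ) - (j : ℂ) / 2) • ggen Γ s (α + μ) (memLG Γ s hα hμ) (j + i - 1))
  | Sum.inr (⟨μ, hμ⟩, i), Sum.inr (⟨ν, hν⟩, j) =>
      (2 : ℂ) • lgen Γ s (μ + ν) (memGG Γ s hs hμ hν) (i + j)

/-- The bilinear bracket of `SV[Γ,s]`. -/
def bkt (hs : 2 * s ∈ Γ) (x y : SV Γ s) : SV Γ s :=
  x.sum fun a ca => y.sum fun b cb => (ca * cb) • bk Γ s hs a b

/-- `x` lies in the even part `SV_0̄` (the span of the `L_{α,i}`). -/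
def IsEvenElt (x : SV Γ s) : Prop := ∀ b, x (Sum.inr b) = 0

/-- `x` lies in the odd part `SV_1̄` (the span of the `G_{μ,j}`). -/
def IsOddElt (x : SV Γ s) : Prop := ∀ a, x (Sum.inl a) = 0

/-- `x` is `ℤ₂`-homogeneous. -/
def IsHomog (x : SV Γ s) : Prop := IsEvenElt Γ s x ∨ IsOddElt Γ s x

/-- `x` lies in the degree-`γ` component `SV_γ = span{L_{γ,i}, G_{γ,i}}` of the `Ω`-grading. -/
def InDeg (γ : ℂ) (x : SV Γ s) : Prop :=
  (∀ p : Γ × ℕ, (p.1 : ℂ) ≠ γ → x (Sum.inl p) = 0) ∧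
  (∀ q : {μ : ℂ // μ - s ∈ Γ} × ℕ, (q.1 : ℂ) ≠ γ → x (Sum.inr q) = 0)

/-- The group `Ω`, generated by `Γ ∪ {s}`. -/
def Omega : AddSubgroup ℂ := Γ ⊔ AddSubgroup.closure {s}

theorem gamma_mem_Omega {α : ℂ} (hα : α ∈ Γ) : α ∈ Omega Γ s :=
  AddSubgroup.mem_sup_left hα

theorem s_mem_Omega : s ∈ Omega Γ s :=
  AddSubgroup.mem_sup_right (AddSubgroup.subset_closure (Set.mem_singleton s))

theorem smu_mem_Omega {μ : ℂ} (hμ : μ - s ∈ Γ) : μ ∈ Omega Γ s := by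
  have h := add_mem (gamma_mem_Omega Γ s hμ) (s_mem_Omega Γ s)
  rwa [sub_add_cancel] at h

/-- The `Ω`-degree of a basis index. -/
def idxDeg : Idx Γ s → ℂ
  | Sum.inl p => (p.1 : ℂ)
  | Sum.inr q => (q.1 : ℂ)

theorem idxDeg_mem (a : Idx Γ s) : idxDeg Γ s a ∈ Omega Γ s := by
  cases a with
  | inl p => exact gamma_mem_Omega Γ s p.1.2
  | inr q => exact smu_mem_Omega Γ s q.1.2

/-- The derivation `D_φ` attached to a group homomorphism `φ : (Ω,+) → (ℂ,+)`:
`D_φ (L_{α,i}) = φ(α) • L_{α,i}` and `D_φ (G_{μ,j}) = φ(μ) • G_{μ,j}`. -/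
def Dphi (φ : ↥(Omega Γ s) →+ ℂ) : SV Γ s →ₗ[ℂ] SV Γ s :=
  Finsupp.lsum ℂ fun a => φ ⟨idxDeg Γ s a, idxDeg_mem Γ s a⟩ • Finsupp.lsingle a

/-- `D` is a parity-`0` (even) derivation of `SV[Γ,s]`. -/
def IsEvenDer (hs : 2 * s ∈ Γ) (D : SV Γ s →ₗ[ℂ] SV Γ s) : Prop :=
  (∀ x, IsEvenElt Γ s x → IsEvenElt Γ s (D x)) ∧
  (∀ x, IsOddElt Γ s x → IsOddElt Γ s (D x)) ∧
  (∀ x y, IsHomog Γ s x →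
    D (bkt Γ s hs x y) = bkt Γ s hs (D x) y + bkt Γ s hs x (D y))

/-- `D` is a parity-`1` (odd) derivation of `SV[Γ,s]`. -/
def IsOddDer (hs : 2 * s ∈ Γ) (D : SV Γ s →ₗ[ℂ] SV Γ s) : Prop :=
  (∀ x, IsEvenElt Γ s x → IsOddElt Γ s (D x)) ∧
  (∀ x, IsOddElt Γ s x → IsEvenElt Γ s (D x)) ∧
  (∀ x y, IsEvenElt Γ s x →
    D (bkt Γ s hs x y) = bkt Γ s hs (D x) y + bkt Γ s hs x (D y)) ∧
  (∀ x y, IsOddElt Γ s x →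
    D (bkt Γ s hs x y) = bkt Γ s hs (D x) y - bkt Γ s hs x (D y))

/-- `D` is a derivation of `SV[Γ,s]`: a sum of an even and an odd derivation. -/
def IsDer (hs : 2 * s ∈ Γ) (D : SV Γ s →ₗ[ℂ] SV Γ s) : Prop :=
  ∃ D0 D1, IsEvenDer Γ s hs D0 ∧ IsOddDer Γ s hs D1 ∧ D = D0 + D1

/-- `D` has degree `γ`: it maps `SV_δ` into `SV_{δ+γ}` for every `δ`. -/
def HasDeg (γ : ℂ) (D : SV Γ s →ₗ[ℂ] SV Γ s) : Prop :=
  ∀ (δ : ℂ) (x : SV Γ s), InDeg Γ s δ x → InDeg Γ s (δ + γ) (D x)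

/-- `ψ` is a 2-cocycle on `SV[Γ,s]` (super skew-symmetry and super Jacobi identity,
with the sign `(-1)^{|x||y|}` spelled out according to the parities). -/
def IsCocycle (hs : 2 * s ∈ Γ) (ψ : SV Γ s →ₗ[ℂ] SV Γ s →ₗ[ℂ] ℂ) : Prop :=
  (∀ x y, IsHomog Γ s x → IsHomog Γ s y → (IsEvenElt Γ s x ∨ IsEvenElt Γ s y) →
    ψ x y = - ψ y x) ∧
  (∀ x y, IsOddElt Γ s x → IsOddElt Γ s y → ψ x y = ψ y x) ∧
  (∀ x y z, IsHomog Γ s x → IsHomog Γ s y → (IsEvenElt Γ s x ∨ IsEvenElt Γ s y) →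
    ψ x (bkt Γ s hs y z) = ψ (bkt Γ s hs x y) z + ψ y (bkt Γ s hs x z)) ∧
  (∀ x y z, IsOddElt Γ s x → IsOddElt Γ s y →
    ψ x (bkt Γ s hs y z) = ψ (bkt Γ s hs x y) z - ψ y (bkt Γ s hs x z))

/-- `f : SV → ℂ` satisfies the recursive formulas associated to the 2-cocycle `ψ`. -/
def IsAssocMap (hs : 2 * s ∈ Γ) (ψ : SV Γ s →ₗ[ℂ] SV Γ s →ₗ[ℂ] ℂ)
    (f : SV Γ s →ₗ[ℂ] ℂ) : Prop :=
  (∀ i : ℕ, f (lgen Γ s 0 (zero_mem Γ) i)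
      = ψ (lgen Γ s 0 (zero_mem Γ) 0) (lgen Γ s 0 (zero_mem Γ) (i + 1)) / (i + 1)) ∧
  (∀ (α : ℂ) (hα : α ∈ Γ) (i : ℕ), α ≠ 0 →
    f (lgen Γ s α hα i)
      = (ψ (lgen Γ s 0 (zero_mem Γ) 0) (lgen Γ s α hα i) - (i : ℂ) * f (lgen Γ s α hα (i - 1))) / α) ∧
  (∀ (h0 : (0 : ℂ) - s ∈ Γ) (i : ℕ),
    f (ggen Γ s 0 h0 i) = (2 / (2 * (i : ℂ) - 1)) * ψ (lgen Γ s 0 (zero_mem Γ) 1) (ggen Γ s 0 h0 i)) ∧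
  (∀ (μ : ℂ) (hμ : μ - s ∈ Γ) (i : ℕ), μ ≠ 0 →
    f (ggen Γ s μ hμ i)
      = (ψ (lgen Γ s 0 (zero_mem Γ) 0) (ggen Γ s μ hμ i) - (i : ℂ) * f (ggen Γ s μ hμ (i - 1))) / μ)

/-- If `z` is odd and `[z,z] = 0` then `z = 0`. -/
theorem odd_selfbracket_zero (Γ : AddSubgroup ℂ) (hΓ : ∀ n : ℤ, (n : ℂ) ∈ Γ)
    (s : ℂ) (hs : 2 * s ∈ Γ) :
    ∀ z : SV Γ s, IsOddElt Γ s z → bkt Γ s hs z z = 0 → z = 0 := by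

  intro z hodd hbz
  by_contra hne
  have hSne : z.support.Nonempty := Finsupp.support_nonempty_iff.mpr hne
  have hinr : ∀ a ∈ z.support, ∃ q, a = Sum.inr q := by
    intro a ha
    cases a with
    | inl p => exact absurd (hodd p) (Finsupp.mem_support_iff.mp ha)
    | inr q => exact ⟨q, rfl⟩
  classical
  let R : Idx Γ s → ℝ := Sum.elim (fun _ => 0) (fun q => q.1.1.re)
  let I : Idx Γ s → ℝ := Sum.elim (fun _ => 0) (fun q => q.1.1.im)
  let N : Idx Γ s → ℕ := Sum.elim (fun _ => 0) (fun q => q.2)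
  obtain ⟨a1, ha1, hmax1⟩ := z.support.exists_max_image R hSne
  set S1 := z.support.filter (fun a => R a = R a1) with hS1def
  have hS1ne : S1.Nonempty := ⟨a1, Finset.mem_filter.mpr ⟨ha1, rfl⟩⟩
  obtain ⟨a2, ha2, hmax2⟩ := S1.exists_max_image I hS1ne
  set S2 := S1.filter (fun a => I a = I a2) with hS2def
  have hS2ne : S2.Nonempty := ⟨a2, Finset.mem_filter.mpr ⟨ha2, rfl⟩⟩
  obtain ⟨a0, ha0, hmax3⟩ := S2.exists_max_image N hS2ne
  have ha0S1 : a0 ∈ S1 := (Finset.mem_filter.mp ha0).1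
  have ha0S : a0 ∈ z.support := (Finset.mem_filter.mp ha0S1).1
  obtain ⟨q0, rfl⟩ := hinr a0 ha0S
  obtain ⟨⟨μ0, hμ0⟩, i0⟩ := q0
  have hRa1 : R a1 = μ0.re := ((Finset.mem_filter.mp ha0S1).2).symm
  have hIa2 : I a2 = μ0.im := ((Finset.mem_filter.mp ha0).2).symm
  -- key uniqueness lemma
  have key : ∀ (μ : ℂ) (hμ : μ - s ∈ Γ) (i : ℕ), (Sum.inr (⟨μ, hμ⟩, i) : Idx Γ s) ∈ z.support →
      ∀ (ν : ℂ) (hν : ν - s ∈ Γ) (j : ℕ), (Sum.inr (⟨ν, hν⟩, j) : Idx Γ s) ∈ z.support →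
      μ + ν = μ0 + μ0 → i + j = i0 + i0 → μ = μ0 ∧ i = i0 ∧ ν = μ0 ∧ j = i0 := by
    intro μ hμ i hμS ν hν j hνS hsum hnsum
    have hre : μ.re + ν.re = μ0.re + μ0.re := by
      have := congrArg Complex.re hsum; simpa using this
    have h1 : μ.re ≤ μ0.re := by
      have := hmax1 _ hμS; rwa [hRa1] at this
    have h2 : ν.re ≤ μ0.re := by
      have := hmax1 _ hνS; rwa [hRa1] at this
    have hre1 : μ.re = μ0.re := by linarith
    have hre2 : ν.re = μ0.re := by linarith
    have hμS1 : (Sum.inr (⟨μ, hμ⟩, i) : Idx Γ s) ∈ S1 :=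
      Finset.mem_filter.mpr ⟨hμS, by rw [hRa1]; exact hre1⟩
    have hνS1 : (Sum.inr (⟨ν, hν⟩, j) : Idx Γ s) ∈ S1 :=
      Finset.mem_filter.mpr ⟨hνS, by rw [hRa1]; exact hre2⟩
    have him : μ.im + ν.im = μ0.im + μ0.im := by
      have := congrArg Complex.im hsum; simpa using this
    have h3 : μ.im ≤ μ0.im := by
      have := hmax2 _ hμS1; rwa [hIa2] at this
    have h4 : ν.im ≤ μ0.im := by
      have := hmax2 _ hνS1; rwa [hIa2] at this
    have him1 : μ.im = μ0.im := by linarith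
    have him2 : ν.im = μ0.im := by linarith
    have hμS2 : (Sum.inr (⟨μ, hμ⟩, i) : Idx Γ s) ∈ S2 :=
      Finset.mem_filter.mpr ⟨hμS1, by rw [hIa2]; exact him1⟩
    have hνS2 : (Sum.inr (⟨ν, hν⟩, j) : Idx Γ s) ∈ S2 :=
      Finset.mem_filter.mpr ⟨hνS1, by rw [hIa2]; exact him2⟩
    have h5 : i ≤ i0 := hmax3 _ hμS2
    have h6 : j ≤ i0 := hmax3 _ hνS2
    refine ⟨Complex.ext hre1 him1, by omega, Complex.ext hre2 him2, by omega⟩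
  -- evaluation index
  set a0' : Idx Γ s := Sum.inr (⟨μ0, hμ0⟩, i0) with ha0'def
  set t : Idx Γ s := Sum.inl (⟨μ0 + μ0, memGG Γ s hs hμ0 hμ0⟩, i0 + i0) with htdef
  -- value of bk on inr-inr pairs at t
  have hbkval : ∀ (μ : ℂ) (hμ : μ - s ∈ Γ) (i : ℕ) (ν : ℂ) (hν : ν - s ∈ Γ) (j : ℕ),
      bk Γ s hs (Sum.inr (⟨μ, hμ⟩, i)) (Sum.inr (⟨ν, hν⟩, j)) t
        = if μ + ν = μ0 + μ0 ∧ i + j = i0 + i0 then 2 else 0 := by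
    intro μ hμ i ν hν j
    by_cases h : μ + ν = μ0 + μ0 ∧ i + j = i0 + i0
    · have ht : (Sum.inl (⟨μ + ν, memGG Γ s hs hμ hν⟩, i + j) : Idx Γ s) = t := by
        rw [htdef]
        exact congrArg Sum.inl (Prod.ext (Subtype.ext h.1) h.2)
      simp [bk, lgen, ht, h, Finsupp.single_eq_same, htdef]
    · have ht : (Sum.inl (⟨μ + ν, memGG Γ s hs hμ hν⟩, i + j) : Idx Γ s) ≠ t := by
        rw [htdef]
        intro hc
        apply h
        have hc' := Sum.inl.inj hc
        exact ⟨congrArg Subtype.val (congrArg Prod.fst hc'), congrArg Prod.snd hc'⟩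
      simp [bk, lgen, h, Finsupp.single_eq_of_ne ht.symm]
  -- compute the coefficient of bkt z z at t
  have hsum : (bkt Γ s hs z z) t
      = ∑ a ∈ z.support, ∑ b ∈ z.support, (z a * z b) * (bk Γ s hs a b t) := by
    rw [bkt]
    rw [Finsupp.sum_apply]
    rw [Finsupp.sum]
    refine Finset.sum_congr rfl fun a _ => ?_
    rw [Finsupp.sum_apply, Finsupp.sum]
    refine Finset.sum_congr rfl fun b _ => ?_
    rw [Finsupp.smul_apply, smul_eq_mul]
  have hzero : ∀ a ∈ z.support, ∀ b ∈ z.support, ¬(a = a0' ∧ b = a0') →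
      (z a * z b) * (bk Γ s hs a b t) = 0 := by
    intro a ha b hb hnab
    obtain ⟨⟨⟨μ, hμ⟩, i⟩, rfl⟩ := hinr a ha
    obtain ⟨⟨⟨ν, hν⟩, j⟩, rfl⟩ := hinr b hb
    rw [hbkval]
    by_cases h : μ + ν = μ0 + μ0 ∧ i + j = i0 + i0
    · exfalso
      obtain ⟨e1, e2, e3, e4⟩ := key μ hμ i ha ν hν j hb h.1 h.2
      subst e1; subst e2; subst e3; subst e4
      exact hnab ⟨rfl, rfl⟩
    · simp [h]
  have hval : (bkt Γ s hs z z) t = 2 * (z a0') ^ 2 := by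
    rw [hsum]
    rw [Finset.sum_eq_single_of_mem a0' ha0S]
    · rw [Finset.sum_eq_single_of_mem a0' ha0S]
      · rw [ha0'def, hbkval]
        simp [pow_two]; ring
      · intro b hb hbne
        exact hzero _ ha0S _ hb (fun hc => hbne hc.2)
    · intro a ha hane
      refine Finset.sum_eq_zero fun b hb => ?_
      exact hzero _ ha _ hb (fun hc => hane hc.1)
  rw [hbz] at hval
  have hz0 : z a0' ≠ 0 := Finsupp.mem_support_iff.mp ha0S
  simp only [Finsupp.coe_zero, Pi.zero_apply] at hval
  have : (2 : ℂ) * (z a0') ^ 2 ≠ 0 := by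
    exact mul_ne_zero two_ne_zero (pow_ne_zero _ hz0)
  exact this hval.symm


end SVSuper
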